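/- Let $\gamma$ be a curve fragment in $X$ with extension $\bar\gamma:I_\gamma\to\operatorname{sh}(X)$ obtained by interpolating linearly across gaps in the semihull, and let $\rho:X\to[0,\infty]$ be Borel with extension $\bar\rho$ to $\operatorname{sh}(X)$. Then $\int_\gamma\rho\,ds+\operatorname{gap}(\rho,\gamma)=\int_{\bar\gamma}\bar\rho\,ds$, where $\operatorname{gap}(\rho,\gamma)=\sum_i\frac{\rho(\gamma_{a_i})+\rho(\gamma_{b_i})}{2}d(\gamma_{a_i},\gamma_{b_i})$ summed over the gaps $(a_i,b_i)$ of $\gamma$. -/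

import Mathlib

open MeasureTheory Filter Topology Set
open scoped Classical
open scoped ENNReal NNReal

/-- A curve fragment: a bi-Lipschitz map from a nonempty compact subset of `ℝ` into `X`. -/
structure CurveFragment (X : Type*) [MetricSpace X] where
  toFun : ℝ → X
  dom : Set ℝ
  compact : IsCompact dom
  nonempty : dom.Nonempty
  biLip : ∃ L : ℝ, 0 < L ∧ ∀ s ∈ dom, ∀ t ∈ dom,
    L⁻¹ * |s - t| ≤ dist (toFun s) (toFun t) ∧ dist (toFun s) (toFun t) ≤ L * |s - t|

namespace CurveFragment

variable {X : Type*} [MetricSpace X]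

/-- The pairs `(a, b)` of endpoints of the gaps of a curve fragment. -/
def gapPairs (γ : CurveFragment X) : Set (ℝ × ℝ) :=
  {p | p.1 ∈ γ.dom ∧ p.2 ∈ γ.dom ∧ p.1 < p.2 ∧ Set.Ioo p.1 p.2 ∩ γ.dom = ∅}

/-- The convex hull `I_γ` of the domain of `γ`. -/
noncomputable def hull (γ : CurveFragment X) : Set ℝ := Set.Icc (sInf γ.dom) (sSup γ.dom)

/-- The left endpoint of the gap containing `t`. -/
noncomputable def gapL (γ : CurveFragment X) (t : ℝ) : ℝ := sSup (γ.dom ∩ Set.Iic t)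

/-- The right endpoint of the gap containing `t`. -/
noncomputable def gapR (γ : CurveFragment X) (t : ℝ) : ℝ := sInf (γ.dom ∩ Set.Ici t)

/-- `γ` has metric speed `v` at `t` (limit taken along the domain). -/
def HasMetricSpeed (γ : CurveFragment X) (t v : ℝ) : Prop :=
  Tendsto (fun s => dist (γ.toFun s) (γ.toFun t) / |s - t|) (𝓝[γ.dom \ {t}] t) (𝓝 v)

end CurveFragment

/-- The canonical "evaluation" embedding of `X` into functionals on real functions on `X`,
realizing the embedding of `X` into its Lipschitz free space. -/
def iotaF {X : Type*} [MetricSpace X] (x : X) : (X → ℝ) → ℝ := fun f => f x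

/-- The free-space (dual) distance with base point `x₀`. -/
noncomputable def freeDist {X : Type*} [MetricSpace X] (x₀ : X) (u v : (X → ℝ) → ℝ) : ℝ :=
  ⨆ f : {f : X → ℝ // LipschitzWith 1 f ∧ f x₀ = 0}, |u f.1 - v f.1|

variable {X : Type*} [MetricSpace X]

open CurveFragment in
/-- The extension `γ̄ : I_γ → sh(X)` of a curve fragment, interpolating linearly across the
gaps inside the semihull. -/
noncomputable def barFrag (γ : CurveFragment X) (t : ℝ) : (X → ℝ) → ℝ :=
  if t ∈ γ.dom then iotaF (γ.toFun t)
  else iotaF (γ.toFun (gapL γ t)) +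
    ((t - gapL γ t) / (gapR γ t - gapL γ t)) •
      (iotaF (γ.toFun (gapR γ t)) - iotaF (γ.toFun (gapL γ t)))

open CurveFragment in
/-- The composition `ρ̄ ∘ γ̄` of the convex extension `ρ̄` of `ρ` with the extended curve
`γ̄`, written out explicitly. -/
noncomputable def barRhoAlong (γ : CurveFragment X) (ρ : X → ℝ≥0∞) (t : ℝ) : ℝ≥0∞ :=
  if t ∈ γ.dom then ρ (γ.toFun t)
  else ENNReal.ofReal ((t - gapL γ t) / (gapR γ t - gapL γ t)) * ρ (γ.toFun (gapR γ t)) +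
    ENNReal.ofReal ((gapR γ t - t) / (gapR γ t - gapL γ t)) * ρ (γ.toFun (gapL γ t))

/-- The weighted gap functional `gap(ρ, γ) = ∑ (ρ(γ(aᵢ)) + ρ(γ(bᵢ)))/2 · d(γ(aᵢ), γ(bᵢ))`. -/
noncomputable def gapWeighted (γ : CurveFragment X) (ρ : X → ℝ≥0∞) : ℝ≥0∞ :=
  ∑' p : γ.gapPairs,
    ((ρ (γ.toFun (p : ℝ × ℝ).1) + ρ (γ.toFun (p : ℝ × ℝ).2)) / 2) *
      edist (γ.toFun (p : ℝ × ℝ).1) (γ.toFun (p : ℝ × ℝ).2)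

/-- A curve `c` in the free space has metric speed `v` at `t` along the set `S`, with respect
to the free-space distance. -/
def HasFreeSpeed (x₀ : X) (c : ℝ → (X → ℝ) → ℝ) (S : Set ℝ) (t v : ℝ) : Prop :=
  Tendsto (fun s => freeDist x₀ (c s) (c t) / |s - t|) (𝓝[S \ {t}] t) (𝓝 v)


/-! ### Auxiliary lemmas -/

section AuxProof

open CurveFragment

lemma iotaF_interp_zero (x y : X) : iotaF x + (0:ℝ) • (iotaF y - iotaF x) = iotaF x := by
  funext f; simp [iotaF]

lemma iotaF_interp_one (x y : X) : iotaF x + (1:ℝ) • (iotaF y - iotaF x) = iotaF y := by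
  funext f; simp [iotaF]

lemma freeDist_interp (x₀ x y : X) (c c' : ℝ) :
    freeDist x₀ (iotaF x + c • (iotaF y - iotaF x)) (iotaF x + c' • (iotaF y - iotaF x)) =
      |c - c'| * dist x y := by
  have hval : ∀ f : {f : X → ℝ // LipschitzWith 1 f ∧ f x₀ = 0},
      |(iotaF x + c • (iotaF y - iotaF x)) f.1 - (iotaF x + c' • (iotaF y - iotaF x)) f.1|
        = |c - c'| * |f.1 y - f.1 x| := by
    intro f
    have h : (iotaF x + c • (iotaF y - iotaF x)) f.1
        - (iotaF x + c' • (iotaF y - iotaF x)) f.1 = (c - c') * (f.1 y - f.1 x) := by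
      simp only [Pi.add_apply, Pi.smul_apply, Pi.sub_apply, smul_eq_mul, iotaF]
      ring
    rw [h, abs_mul]
  have hle : ∀ f : {f : X → ℝ // LipschitzWith 1 f ∧ f x₀ = 0},
      |c - c'| * |f.1 y - f.1 x| ≤ |c - c'| * dist x y := by
    intro f
    have h1 : |f.1 y - f.1 x| ≤ dist x y := by
      have := f.2.1.dist_le_mul y x
      rw [Real.dist_eq] at this
      simpa [dist_comm] using this
    exact mul_le_mul_of_nonneg_left h1 (abs_nonneg _)
  haveI : Nonempty {f : X → ℝ // LipschitzWith 1 f ∧ f x₀ = 0} :=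
    ⟨⟨fun _ => 0, (LipschitzWith.const 0).weaken zero_le_one, rfl⟩⟩
  unfold freeDist
  apply le_antisymm
  · exact ciSup_le fun f => (hval f).le.trans (hle f)
  · set g : X → ℝ := fun z => dist z x - dist x₀ x with hg
    have hgl : LipschitzWith 1 g := by
      apply LipschitzWith.of_dist_le_mul
      intro u v
      rw [Real.dist_eq]
      have : g u - g v = dist u x - dist v x := by simp [g]
      rw [this]
      calc |dist u x - dist v x| ≤ dist u v := abs_dist_sub_le u v x
        _ = 1 * dist u v := (one_mul _).symm
    have hg0 : g x₀ = 0 := sub_self _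
    have hbdd : BddAbove (Set.range fun f : {f : X → ℝ // LipschitzWith 1 f ∧ f x₀ = 0} =>
        |(iotaF x + c • (iotaF y - iotaF x)) f.1 - (iotaF x + c' • (iotaF y - iotaF x)) f.1|) := by
      refine ⟨|c - c'| * dist x y, ?_⟩
      rintro _ ⟨f, rfl⟩
      exact (hval f).le.trans (hle f)
    refine le_trans ?_ (le_ciSup hbdd (⟨g, hgl, hg0⟩ : {f : X → ℝ // LipschitzWith 1 f ∧ f x₀ = 0}))
    rw [hval]
    show |c - c'| * dist x y ≤ |c - c'| * |g y - g x|
    have hgyx : |g y - g x| = dist x y := by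
      simp only [g]
      rw [show dist y x - dist x₀ x - (dist x x - dist x₀ x) = dist y x by
        rw [dist_self]; ring]
      rw [abs_of_nonneg dist_nonneg, dist_comm]
    rw [hgyx]
  
lemma freeDist_iotaF (x₀ x y : X) : freeDist x₀ (iotaF x) (iotaF y) = dist x y := by
  have h := freeDist_interp x₀ x y 0 1
  rw [iotaF_interp_zero, iotaF_interp_one] at h
  simpa using h

variable (γ : CurveFragment X)

lemma dom_subset_hull : γ.dom ⊆ γ.hull := fun t ht =>
  ⟨csInf_le γ.compact.bddBelow ht, le_csSup γ.compact.bddAbove ht⟩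

lemma gap_subset_hull {p : ℝ × ℝ} (hp : p ∈ γ.gapPairs) : Set.Ioo p.1 p.2 ⊆ γ.hull :=
  fun t ht => ⟨le_trans (dom_subset_hull γ hp.1).1 ht.1.le,
    le_trans ht.2.le (dom_subset_hull γ hp.2.1).2⟩

lemma gap_not_mem_dom {p : ℝ × ℝ} (hp : p ∈ γ.gapPairs) {t : ℝ}
    (ht : t ∈ Set.Ioo p.1 p.2) : t ∉ γ.dom := fun h =>
  Set.eq_empty_iff_forall_notMem.1 hp.2.2.2 t ⟨ht, h⟩

lemma gapL_of_mem {p : ℝ × ℝ} (hp : p ∈ γ.gapPairs) {t : ℝ}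
    (ht : t ∈ Set.Ioo p.1 p.2) : γ.gapL t = p.1 := by
  obtain ⟨h1, h2, hlt, hdisj⟩ := hp
  have hne : (γ.dom ∩ Set.Iic t).Nonempty := ⟨p.1, h1, ht.1.le⟩
  have hbdd : BddAbove (γ.dom ∩ Set.Iic t) := ⟨t, fun x hx => hx.2⟩
  apply le_antisymm
  · apply csSup_le hne
    rintro x ⟨hx, hxt⟩
    by_contra hxa
    push_neg at hxa
    have : x ∈ Set.Ioo p.1 p.2 ∩ γ.dom := ⟨⟨hxa, lt_of_le_of_lt hxt ht.2⟩, hx⟩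
    rw [hdisj] at this
    exact this
  · exact le_csSup hbdd ⟨h1, ht.1.le⟩

lemma gapR_of_mem {p : ℝ × ℝ} (hp : p ∈ γ.gapPairs) {t : ℝ}
    (ht : t ∈ Set.Ioo p.1 p.2) : γ.gapR t = p.2 := by
  obtain ⟨h1, h2, hlt, hdisj⟩ := hp
  have hne : (γ.dom ∩ Set.Ici t).Nonempty := ⟨p.2, h2, ht.2.le⟩
  have hbdd : BddBelow (γ.dom ∩ Set.Ici t) := ⟨t, fun x hx => hx.2⟩
  apply le_antisymm
  · exact csInf_le hbdd ⟨h2, ht.2.le⟩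
  · apply le_csInf hne
    rintro x ⟨hx, hxt⟩
    by_contra hxb
    push_neg at hxb
    have : x ∈ Set.Ioo p.1 p.2 ∩ γ.dom := ⟨⟨lt_of_lt_of_le ht.1 hxt, hxb⟩, hx⟩
    rw [hdisj] at this
    exact this

lemma hull_diff_dom :
    γ.hull \ γ.dom = ⋃ p : γ.gapPairs, Set.Ioo (p : ℝ × ℝ).1 (p : ℝ × ℝ).2 := by
  ext t
  simp only [Set.mem_diff, Set.mem_iUnion]
  constructor
  · rintro ⟨hth, htd⟩
    set a := γ.gapL t with ha
    set b := γ.gapR t with hb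
    have hS1 : (γ.dom ∩ Set.Iic t).Nonempty :=
      ⟨sInf γ.dom, γ.compact.sInf_mem γ.nonempty, hth.1⟩
    have hS2 : (γ.dom ∩ Set.Ici t).Nonempty :=
      ⟨sSup γ.dom, γ.compact.sSup_mem γ.nonempty, hth.2⟩
    have hS1b : BddAbove (γ.dom ∩ Set.Iic t) := ⟨t, fun x hx => hx.2⟩
    have hS2b : BddBelow (γ.dom ∩ Set.Ici t) := ⟨t, fun x hx => hx.2⟩
    have haS : a ∈ γ.dom ∩ Set.Iic t :=
      ((γ.compact.isClosed.inter isClosed_Iic).csSup_mem hS1 hS1b)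
    have hbS : b ∈ γ.dom ∩ Set.Ici t :=
      ((γ.compact.isClosed.inter isClosed_Ici).csInf_mem hS2 hS2b)
    have hat : a < t := lt_of_le_of_ne haS.2 (fun h => htd (h ▸ haS.1))
    have htb : t < b := lt_of_le_of_ne hbS.2 (fun h => htd (h.symm ▸ hbS.1))
    refine ⟨⟨(a, b), haS.1, hbS.1, hat.trans htb, ?_⟩, hat, htb⟩
    apply Set.eq_empty_iff_forall_notMem.2
    rintro x ⟨⟨hax, hxb⟩, hxd⟩
    rcases le_or_gt x t with h | h
    · have : x ≤ a := le_csSup hS1b ⟨hxd, h⟩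
      linarith
    · have : b ≤ x := csInf_le hS2b ⟨hxd, h.le⟩
      linarith
  · rintro ⟨⟨p, hp⟩, htp⟩
    exact ⟨gap_subset_hull γ hp htp, gap_not_mem_dom γ hp htp⟩

lemma gapPairs_pairwiseDisjoint :
    γ.gapPairs.PairwiseDisjoint (fun p : ℝ × ℝ => Set.Ioo p.1 p.2) := by
  intro p hp q hq hpq
  refine Set.disjoint_left.2 fun t htp htq => hpq ?_
  have h1 : p.1 = q.1 := by rw [← gapL_of_mem γ hp htp, gapL_of_mem γ hq htq]
  have h2 : p.2 = q.2 := by rw [← gapR_of_mem γ hp htp, gapR_of_mem γ hq htq]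
  exact Prod.ext h1 h2

lemma gapPairs_countable : γ.gapPairs.Countable :=
  (gapPairs_pairwiseDisjoint γ).countable_of_isOpen (fun _ _ => isOpen_Ioo)
    (fun p hp => Set.nonempty_Ioo.2 hp.2.2.1)

lemma barFrag_of_mem {t : ℝ} (ht : t ∈ γ.dom) : barFrag γ t = iotaF (γ.toFun t) :=
  if_pos ht

lemma barFrag_gap {p : ℝ × ℝ} (hp : p ∈ γ.gapPairs) {t : ℝ} (ht : t ∈ Set.Ioo p.1 p.2) :
    barFrag γ t = iotaF (γ.toFun p.1) +
      ((t - p.1) / (p.2 - p.1)) • (iotaF (γ.toFun p.2) - iotaF (γ.toFun p.1)) := by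
  rw [barFrag, if_neg (gap_not_mem_dom γ hp ht), gapL_of_mem γ hp ht, gapR_of_mem γ hp ht]

lemma freeDist_barFrag_gap (x₀ : X) {p : ℝ × ℝ} (hp : p ∈ γ.gapPairs) {s t : ℝ}
    (hs : s ∈ Set.Ioo p.1 p.2) (ht : t ∈ Set.Ioo p.1 p.2) :
    freeDist x₀ (barFrag γ s) (barFrag γ t)
      = |s - t| / (p.2 - p.1) * dist (γ.toFun p.1) (γ.toFun p.2) := by
  rw [barFrag_gap γ hp hs, barFrag_gap γ hp ht, freeDist_interp]
  have hba : (0:ℝ) < p.2 - p.1 := sub_pos.2 hp.2.2.1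
  have h : |(s - p.1) / (p.2 - p.1) - (t - p.1) / (p.2 - p.1)| = |s - t| / (p.2 - p.1) := by
    rw [div_sub_div_same, sub_sub_sub_cancel_right, abs_div, abs_of_pos hba]
  rw [h]

lemma hasFreeSpeed_gap_value (x₀ : X) {p : ℝ × ℝ} (hp : p ∈ γ.gapPairs) {t v : ℝ}
    (ht : t ∈ Set.Ioo p.1 p.2) (hv : HasFreeSpeed x₀ (barFrag γ) γ.hull t v) :
    v = dist (γ.toFun p.1) (γ.toFun p.2) / (p.2 - p.1) := by
  have hba : (0:ℝ) < p.2 - p.1 := sub_pos.2 hp.2.2.1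
  have hmem : Set.Ioo p.1 p.2 ∈ 𝓝 t := isOpen_Ioo.mem_nhds ht
  have hne : (𝓝[γ.hull \ {t}] t).NeBot := by
    have h1 : 𝓝[Set.Ioo p.1 p.2 \ {t}] t ≤ 𝓝[γ.hull \ {t}] t :=
      nhdsWithin_mono t (Set.diff_subset_diff_left (gap_subset_hull γ hp))
    have h2 : (𝓝[Set.Ioo p.1 p.2 \ {t}] t).NeBot := by
      rw [Set.diff_eq, nhdsWithin_inter_of_mem (mem_nhdsWithin_of_mem_nhds hmem)]
      infer_instance
    exact h2.mono h1
  have hev : (fun s => freeDist x₀ (barFrag γ s) (barFrag γ t) / |s - t|)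
      =ᶠ[𝓝[γ.hull \ {t}] t]
      fun _ => dist (γ.toFun p.1) (γ.toFun p.2) / (p.2 - p.1) := by
    filter_upwards [mem_nhdsWithin_of_mem_nhds hmem, self_mem_nhdsWithin] with s hs hs'
    rw [freeDist_barFrag_gap γ x₀ hp hs ht]
    have hst : |s - t| ≠ 0 := by
      simp only [ne_eq, abs_eq_zero, sub_eq_zero]
      exact hs'.2
    field_simp
  exact tendsto_nhds_unique hv ((tendsto_congr' hev).2 tendsto_const_nhds)

lemma sp_eq_spb_on_dom (x₀ : X) {t v w : ℝ} (ht : t ∈ γ.dom)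
    (hne : (𝓝[γ.dom \ {t}] t).NeBot)
    (hv : γ.HasMetricSpeed t v) (hw : HasFreeSpeed x₀ (barFrag γ) γ.hull t w) : v = w := by
  have hmono : 𝓝[γ.dom \ {t}] t ≤ 𝓝[γ.hull \ {t}] t :=
    nhdsWithin_mono t (Set.diff_subset_diff_left (dom_subset_hull γ))
  have hw' : Tendsto (fun s => freeDist x₀ (barFrag γ s) (barFrag γ t) / |s - t|)
      (𝓝[γ.dom \ {t}] t) (𝓝 w) := hw.mono_left hmono
  have hev : (fun s => freeDist x₀ (barFrag γ s) (barFrag γ t) / |s - t|)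
      =ᶠ[𝓝[γ.dom \ {t}] t] fun s => dist (γ.toFun s) (γ.toFun t) / |s - t| := by
    filter_upwards [self_mem_nhdsWithin] with s hs
    rw [barFrag_of_mem γ hs.1, barFrag_of_mem γ ht, freeDist_iotaF]
  exact tendsto_nhds_unique hv ((tendsto_congr' hev).1 hw')

lemma countable_isolated :
    {t | t ∈ γ.dom ∧ ¬ (𝓝[γ.dom \ {t}] t).NeBot}.Countable := by
  set S := {t | t ∈ γ.dom ∧ ¬ (𝓝[γ.dom \ {t}] t).NeBot} with hS
  have key : ∀ t ∈ S, ∃ ε > (0:ℝ), ∀ s ∈ γ.dom \ {t}, ε ≤ dist t s := by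
    intro t ht
    have h1 : t ∉ closure (γ.dom \ {t}) := fun h =>
      ht.2 (mem_closure_iff_nhdsWithin_neBot.1 h)
    rw [Metric.mem_closure_iff] at h1
    push_neg at h1
    exact h1
  choose! ε hε0 hε using key
  have key2 : ∀ t ∈ S, ∃ q : ℚ, t - ε t < (q:ℝ) ∧ (q:ℝ) < t := by
    intro t ht
    exact exists_rat_btwn (by linarith [hε0 t ht])
  choose! q hq1 hq2 using key2
  have hinj : Function.Injective (fun t : {t // t ∈ S} => q t.1) := by
    rintro ⟨t, htS⟩ ⟨t', htS'⟩ h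
    simp only at h
    have hr : ((q t : ℝ)) = ((q t' : ℝ)) := by exact_mod_cast h
    apply Subtype.ext
    show t = t'
    by_contra hne
    rcases lt_trichotomy t t' with hlt | heq | hlt
    · have h1 := hq1 t' htS'
      have h2 := hq2 t htS
      have h3 := hε t' htS' t ⟨htS.1, by simpa using hne⟩
      rw [Real.dist_eq, abs_of_pos (by linarith : (0:ℝ) < t' - t)] at h3
      linarith
    · exact hne heq
    · have h1 := hq1 t htS
      have h2 := hq2 t' htS'
      have h3 := hε t htS t' ⟨htS'.1, by simpa using fun hh => hne hh.symm⟩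
      rw [Real.dist_eq, abs_of_pos (by linarith : (0:ℝ) < t - t')] at h3
      linarith
  have : Countable {t // t ∈ S} := hinj.countable
  exact Set.countable_coe_iff.mp this

lemma lintegral_interp_left {a b : ℝ} (hab : a < b) :
    ∫⁻ t in Set.Ioo a b, ENNReal.ofReal ((t - a) / (b - a))
      = ENNReal.ofReal ((b - a) / 2) := by
  have hba : (0:ℝ) < b - a := sub_pos.2 hab
  have hcont : Continuous fun t : ℝ => (t - a) / (b - a) := by continuity
  have hInt : IntegrableOn (fun t => (t - a) / (b - a)) (Set.Ioo a b) :=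
    (hcont.integrableOn_Icc).mono_set Set.Ioo_subset_Icc_self
  have hnn : 0 ≤ᵐ[volume.restrict (Set.Ioo a b)] fun t => (t - a) / (b - a) := by
    filter_upwards [ae_restrict_mem measurableSet_Ioo] with t ht
    exact div_nonneg (by linarith [ht.1]) hba.le
  rw [← ofReal_integral_eq_lintegral_ofReal hInt hnn]
  congr 1
  rw [← integral_Ioc_eq_integral_Ioo, ← intervalIntegral.integral_of_le hab.le]
  have h1 : ∀ t : ℝ, (t - a) / (b - a) = (b - a)⁻¹ * (t + (-a)) := by
    intro t; ring
  simp_rw [h1]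
  rw [intervalIntegral.integral_const_mul]
  rw [intervalIntegral.integral_add intervalIntegral.intervalIntegrable_id
    intervalIntegrable_const]
  rw [integral_id, intervalIntegral.integral_const]
  field_simp
  ring

lemma lintegral_interp_right {a b : ℝ} (hab : a < b) :
    ∫⁻ t in Set.Ioo a b, ENNReal.ofReal ((b - t) / (b - a))
      = ENNReal.ofReal ((b - a) / 2) := by
  have hba : (0:ℝ) < b - a := sub_pos.2 hab
  have hcont : Continuous fun t : ℝ => (b - t) / (b - a) := by continuity
  have hInt : IntegrableOn (fun t => (b - t) / (b - a)) (Set.Ioo a b) :=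
    (hcont.integrableOn_Icc).mono_set Set.Ioo_subset_Icc_self
  have hnn : 0 ≤ᵐ[volume.restrict (Set.Ioo a b)] fun t => (b - t) / (b - a) := by
    filter_upwards [ae_restrict_mem measurableSet_Ioo] with t ht
    exact div_nonneg (by linarith [ht.2]) hba.le
  rw [← ofReal_integral_eq_lintegral_ofReal hInt hnn]
  congr 1
  rw [← integral_Ioc_eq_integral_Ioo, ← intervalIntegral.integral_of_le hab.le]
  have h1 : ∀ t : ℝ, (b - t) / (b - a) = (b - a)⁻¹ * ((-1) * t + b) := by
    intro t; field_simp; ring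
  simp_rw [h1]
  rw [intervalIntegral.integral_const_mul]
  rw [intervalIntegral.integral_add (intervalIntegral.intervalIntegrable_id.const_mul _)
    intervalIntegrable_const]
  rw [intervalIntegral.integral_const_mul, integral_id, intervalIntegral.integral_const]
  field_simp
  ring

lemma gap_lintegral (x₀ : X) (ρ : X → ℝ≥0∞) (spb : ℝ → ℝ)
    (hspb : ∀ᵐ t ∂(volume.restrict γ.hull), HasFreeSpeed x₀ (barFrag γ) γ.hull t (spb t))
    {p : ℝ × ℝ} (hp : p ∈ γ.gapPairs) :
    ∫⁻ t in Set.Ioo p.1 p.2, barRhoAlong γ ρ t * ENNReal.ofReal (spb t)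
      = ((ρ (γ.toFun p.1) + ρ (γ.toFun p.2)) / 2) * edist (γ.toFun p.1) (γ.toFun p.2) := by
  have hab : p.1 < p.2 := hp.2.2.1
  have hba : (0:ℝ) < p.2 - p.1 := sub_pos.2 hab
  set a := p.1
  set b := p.2
  set d := dist (γ.toFun p.1) (γ.toFun p.2) with hd
  have hd0 : 0 ≤ d := dist_nonneg
  set ρa := ρ (γ.toFun p.1)
  set ρb := ρ (γ.toFun p.2)
  set c := ENNReal.ofReal (d / (b - a)) with hc
  have hspb' : ∀ᵐ t ∂(volume.restrict (Set.Ioo a b)),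
      HasFreeSpeed x₀ (barFrag γ) γ.hull t (spb t) :=
    ae_restrict_of_ae_restrict_of_subset (gap_subset_hull γ hp) hspb
  have hcongr : ∀ᵐ t ∂(volume.restrict (Set.Ioo a b)),
      barRhoAlong γ ρ t * ENNReal.ofReal (spb t)
        = ENNReal.ofReal ((t - a) / (b - a)) * (ρb * c)
          + ENNReal.ofReal ((b - t) / (b - a)) * (ρa * c) := by
    filter_upwards [hspb', ae_restrict_mem measurableSet_Ioo] with t hsp ht
    rw [barRhoAlong, if_neg (gap_not_mem_dom γ hp ht), gapL_of_mem γ hp ht,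
      gapR_of_mem γ hp ht, hasFreeSpeed_gap_value γ x₀ hp ht hsp]
    ring
  rw [lintegral_congr_ae hcongr]
  have hg1 : Measurable fun t : ℝ => ENNReal.ofReal ((t - a) / (b - a)) := by
    apply Measurable.ennreal_ofReal
    fun_prop
  have hg2 : Measurable fun t : ℝ => ENNReal.ofReal ((b - t) / (b - a)) := by
    apply Measurable.ennreal_ofReal
    fun_prop
  rw [lintegral_add_left (hg1.mul_const _)]
  rw [lintegral_mul_const _ hg1, lintegral_mul_const _ hg2]
  rw [lintegral_interp_left hab, lintegral_interp_right hab]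
  have hkey : ENNReal.ofReal ((b - a) / 2) * c = ENNReal.ofReal (d / 2) := by
    rw [hc, ← ENNReal.ofReal_mul (by positivity)]
    congr 1
    field_simp
  have hE : edist (γ.toFun a) (γ.toFun b) = ENNReal.ofReal d := by
    rw [edist_dist]
  have h2 : ENNReal.ofReal (d / 2) = ENNReal.ofReal d / 2 := by
    rw [ENNReal.ofReal_div_of_pos (by norm_num)]
    norm_num
  calc ENNReal.ofReal ((b - a) / 2) * (ρb * c) + ENNReal.ofReal ((b - a) / 2) * (ρa * c)
      = (ρa + ρb) * (ENNReal.ofReal ((b - a) / 2) * c) := by ring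
    _ = (ρa + ρb) * ENNReal.ofReal (d / 2) := by rw [hkey]
    _ = (ρa + ρb) / 2 * edist (γ.toFun a) (γ.toFun b) := by
        rw [hE, h2, ENNReal.div_eq_inv_mul, ENNReal.div_eq_inv_mul]
        ring

end AuxProof

/-- The `∗`-integral identity:
`∫_γ ρ ds + gap(ρ, γ) = ∫_{γ̄} ρ̄ ds`, where `γ̄` is the extension of `γ` to the semihull
and `ρ̄` the convex extension of `ρ`, the line integrals being computed with the respective
metric speeds. -/
theorem star_integral_eq_extension [MeasurableSpace X] [BorelSpace X] (x₀ : X)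
    (γ : CurveFragment X) (ρ : X → ℝ≥0∞) (hρ : Measurable ρ)
    (sp : ℝ → ℝ)
    (hsp : ∀ᵐ t ∂(volume.restrict γ.dom), γ.HasMetricSpeed t (sp t))
    (spb : ℝ → ℝ)
    (hspb : ∀ᵐ t ∂(volume.restrict γ.hull), HasFreeSpeed x₀ (barFrag γ) γ.hull t (spb t)) :
    (∫⁻ t in γ.dom, ρ (γ.toFun t) * ENNReal.ofReal (sp t)) + gapWeighted γ ρ =
      ∫⁻ t in γ.hull, barRhoAlong γ ρ t * ENNReal.ofReal (spb t) := by
  classical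
  have hdomM : MeasurableSet γ.dom := γ.compact.isClosed.measurableSet
  have hsub := dom_subset_hull γ
  have hcnt : γ.gapPairs.Countable := gapPairs_countable γ
  haveI := hcnt.to_subtype
  have hdiffM : MeasurableSet (γ.hull \ γ.dom) :=
    measurableSet_Icc.diff hdomM
  have hsplit : γ.hull = γ.dom ∪ (γ.hull \ γ.dom) := (Set.union_diff_cancel hsub).symm
  rw [hsplit, lintegral_union hdiffM Set.disjoint_sdiff_right]
  congr 1
  · -- domain part
    apply lintegral_congr_ae
    have hspb_dom : ∀ᵐ t ∂(volume.restrict γ.dom),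
        HasFreeSpeed x₀ (barFrag γ) γ.hull t (spb t) :=
      ae_restrict_of_ae_restrict_of_subset hsub hspb
    have hSnull : (volume.restrict γ.dom)
        {t | t ∈ γ.dom ∧ ¬ (𝓝[γ.dom \ {t}] t).NeBot} = 0 :=
      le_antisymm (le_trans (Measure.restrict_le_self _)
        ((countable_isolated γ).measure_zero _).le) (by simp)
    have hiso : ∀ᵐ t ∂(volume.restrict γ.dom),
        t ∉ {t | t ∈ γ.dom ∧ ¬ (𝓝[γ.dom \ {t}] t).NeBot} :=
      measure_eq_zero_iff_ae_notMem.1 hSnull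
    filter_upwards [hsp, hspb_dom, hiso, ae_restrict_mem hdomM] with t h1 h2 h3 h4
    have hne : (𝓝[γ.dom \ {t}] t).NeBot := by
      by_contra h
      exact h3 ⟨h4, h⟩
    rw [sp_eq_spb_on_dom γ x₀ h4 hne h1 h2, barRhoAlong, if_pos h4]
  · -- gap part
    rw [hull_diff_dom γ]
    have hpd : Pairwise (Function.onFun Disjoint fun p : γ.gapPairs =>
        Set.Ioo (p : ℝ × ℝ).1 (p : ℝ × ℝ).2) := by
      intro i j hij
      exact gapPairs_pairwiseDisjoint γ i.2 j.2 (fun h => hij (Subtype.ext h))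
    rw [lintegral_iUnion (fun _ => measurableSet_Ioo) hpd]
    unfold gapWeighted
    exact tsum_congr fun p => (gap_lintegral γ x₀ ρ spb hspb p.2).symm
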